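/- arXiv:0903.3453 — 2 statements merged into one kernel-verified Lean document; each statement's English description precedes it below -/
import Mathlib

section
/- In the Hecke algebra H_n, the elements X_1,...,X_n defined by X_1 = 1 and X_{k+1} = q^{-1} T_k X_k T_k pairwise commute, and each X_k is invertible. -/
/-- The simple transposition `s_i = (i, i+1)` in the symmetric group `S_n`. -/
def simpleTrans {n : ℕ} (i : Fin (n - 1)) : Equiv.Perm (Fin n) :=
  Equiv.swap ⟨i, by omega⟩ ⟨i + 1, by have := i.isLt; omega⟩

/-- The Coxeter length of a permutation of `Fin n`, as the number of inversions. -/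
def invLen {n : ℕ} (w : Equiv.Perm (Fin n)) : ℕ :=
  (Finset.univ.filter (fun p : Fin n × Fin n => p.1 < p.2 ∧ w p.2 < w p.1)).card

/-- The defining relations of the Hecke algebra of type `A` on generators
`T_1, …, T_{n-1}` (indexed by `Fin (n-1)`): quadratic relations
`(T_i - q)(T_i + 1) = 0`, braid relations, and commutation relations. -/
inductive HeckeRel (F : Type) [Field F] (q : F) (n : ℕ) :
    FreeAlgebra F (Fin (n - 1)) → FreeAlgebra F (Fin (n - 1)) → Prop
  | quad (i : Fin (n - 1)) :
      HeckeRel F q n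
        ((FreeAlgebra.ι F i - algebraMap F _ q) * (FreeAlgebra.ι F i + 1)) 0
  | braid (i j : Fin (n - 1)) (h : (i : ℕ) + 1 = j) :
      HeckeRel F q n
        (FreeAlgebra.ι F i * FreeAlgebra.ι F j * FreeAlgebra.ι F i)
        (FreeAlgebra.ι F j * FreeAlgebra.ι F i * FreeAlgebra.ι F j)
  | comm (i j : Fin (n - 1)) (h : (i : ℕ) + 1 < j) :
      HeckeRel F q n
        (FreeAlgebra.ι F i * FreeAlgebra.ι F j)
        (FreeAlgebra.ι F j * FreeAlgebra.ι F i)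

/-- The Hecke algebra `H_n` of type `A` over `F` with parameter `q`. -/
abbrev HeckeAlgebra (F : Type) [Field F] (q : F) (n : ℕ) : Type :=
  RingQuot (HeckeRel F q n)

/-- The generator `T_i` of the Hecke algebra. -/
noncomputable def heckeT (F : Type) [Field F] (q : F) (n : ℕ) (i : Fin (n - 1)) :
    HeckeAlgebra F q n :=
  RingQuot.mkAlgHom F (HeckeRel F q n) (FreeAlgebra.ι F i)

private lemma mul_left_comm' {M : Type*} [Semigroup M] {a b : M} (h : a * b = b * a) (x : M) :
    a * (b * x) = b * (a * x) := by rw [← mul_assoc, h, mul_assoc]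

private lemma braid_shift {M : Type*} [Semigroup M] {s t : M} (h : s * t * s = t * s * t)
    (x : M) : s * (t * (s * x)) = t * (s * (t * x)) := by
  rw [← mul_assoc, ← mul_assoc, h, mul_assoc, mul_assoc]

private lemma four_shift {M : Type*} [Semigroup M] {s w : M}
    (h : s * (w * (s * w)) = w * (s * (w * s))) (y : M) :
    s * (w * (s * (w * y))) = w * (s * (w * (s * y))) := by
  have := congrArg (· * y) h
  simpa only [mul_assoc] using this

private lemma key_step {M : Type*} [Semigroup M] {S T W : M}
    (hb : S * T * S = T * S * T) (hw : W * T = T * W)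
    (hih : S * (W * (S * W)) = W * (S * (W * S))) :
    T * (S * (W * (S * (T * (S * (W * S)))))) = S * (W * (S * (T * (S * (W * (S * T)))))) := by
  have hbs : ∀ x, S * (T * (S * x)) = T * (S * (T * x)) := braid_shift hb
  have hws : ∀ x, W * (T * x) = T * (W * x) := mul_left_comm' hw
  have hb0 : S * (T * S) = T * (S * T) := by simpa only [mul_assoc] using hb
  rw [hbs (W * S), hws (S * (T * (W * S))), ← hws S,
    ← hbs (W * (S * (W * (T * S)))), four_shift hih (T * S),
    hbs (W * (S * T)), hws (S * (T * (W * (S * T)))), ← hws (S * T), ← hb0]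

/-- In the Hecke algebra `H_n`, the Jucys–Murphy elements defined by `X_1 = 1` and
`X_{k+1} = q⁻¹ T_k X_k T_k` pairwise commute, and each of them is invertible.
(Here `X` is indexed so that `X k` is the element `X_{k+1}` of the paper.) -/
theorem hecke_JM_commute_isUnit (F : Type) [Field F] (q : F) (hq : q ≠ 0) (n : ℕ)
    (X : ℕ → HeckeAlgebra F q n)
    (hX1 : X 0 = 1)
    (hXrec : ∀ k : Fin (n - 1),
      X ((k : ℕ) + 1) = q⁻¹ • (heckeT F q n k * X k * heckeT F q n k)) :
    (∀ a b : ℕ, a < n → b < n → X a * X b = X b * X a) ∧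
    (∀ a : ℕ, a < n → IsUnit (X a)) := by
  -- the braid relations in the quotient
  have hbraid : ∀ i j : Fin (n - 1), (i : ℕ) + 1 = j →
      heckeT F q n i * heckeT F q n j * heckeT F q n i
        = heckeT F q n j * heckeT F q n i * heckeT F q n j := by
    intro i j h
    have h' := RingQuot.mkAlgHom_rel F (HeckeRel.braid (F := F) (q := q) (n := n) i j h)
    simp only [map_mul] at h'
    exact h'
  -- the commutation relations in the quotient
  have hcommT : ∀ i j : Fin (n - 1), (i : ℕ) + 1 < j →
      heckeT F q n i * heckeT F q n j = heckeT F q n j * heckeT F q n i := by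
    intro i j h
    have h' := RingQuot.mkAlgHom_rel F (HeckeRel.comm (F := F) (q := q) (n := n) i j h)
    simp only [map_mul] at h'
    exact h'
  -- the quadratic relations in the quotient
  have hquad : ∀ i : Fin (n - 1),
      (heckeT F q n i - algebraMap F (HeckeAlgebra F q n) q) * (heckeT F q n i + 1) = 0 := by
    intro i
    have h' := RingQuot.mkAlgHom_rel F (HeckeRel.quad (F := F) (q := q) (n := n) i)
    simp only [map_mul, map_sub, map_add, map_one, map_zero, AlgHom.commutes] at h'
    exact h'
  -- each generator is a unit
  have hTunit : ∀ i : Fin (n - 1), IsUnit (heckeT F q n i) := by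
    intro i
    set t := heckeT F q n i with ht
    set C := algebraMap F (HeckeAlgebra F q n) q with hC
    have hexp : (t - C) * (t + 1) = t * t + t - C * t - C := by noncomm_ring; try simp only [smul_mul_assoc, mul_smul_comm]; try abel
    have h0 : t * t + t - C * t - C = 0 := by rw [← hexp]; exact hquad i
    have hc : t * C = C * t := (Algebra.commutes q t).symm
    have h1 : t * (t + 1 - C) = C := by
      calc t * (t + 1 - C) = t * t + t - t * C := by noncomm_ring; try simp only [smul_mul_assoc, mul_smul_comm]
        _ = t * t + t - C * t := by rw [hc]
        _ = (t * t + t - C * t - C) + C := by noncomm_ring; try simp only [smul_mul_assoc, mul_smul_comm]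
        _ = 0 + C := by rw [h0]
        _ = C := zero_add C
    have h2 : (t + 1 - C) * t = C := by
      calc (t + 1 - C) * t = t * t + t - C * t := by noncomm_ring; try simp only [smul_mul_assoc, mul_smul_comm]
        _ = (t * t + t - C * t - C) + C := by noncomm_ring; try simp only [smul_mul_assoc, mul_smul_comm]
        _ = 0 + C := by rw [h0]
        _ = C := zero_add C
    have hCq : q⁻¹ • C = 1 := by
      rw [hC, Algebra.smul_def, ← map_mul, inv_mul_cancel₀ hq, map_one]
    have hu1 : t * (q⁻¹ • (t + 1 - C)) = 1 := by rw [mul_smul_comm, h1, hCq]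
    have hu2 : (q⁻¹ • (t + 1 - C)) * t = 1 := by rw [smul_mul_assoc, h2, hCq]
    exact ⟨⟨t, q⁻¹ • (t + 1 - C), hu1, hu2⟩, rfl⟩
  -- scalar multiples of units by q⁻¹ are units
  have hsmul_unit : ∀ z : HeckeAlgebra F q n, IsUnit z → IsUnit (q⁻¹ • z) := by
    intro z hz
    rw [Algebra.smul_def]
    exact ((isUnit_iff_ne_zero.2 (inv_ne_zero hq)).map (algebraMap F (HeckeAlgebra F q n))).mul hz
  -- every X a is a unit
  have hXunit : ∀ a, a < n → IsUnit (X a) := by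
    intro a
    induction a with
    | zero => intro _; rw [hX1]; exact isUnit_one
    | succ m ih =>
      intro hm
      have hm' : m < n - 1 := by omega
      have hrec : X (m + 1)
          = q⁻¹ • (heckeT F q n ⟨m, hm'⟩ * X m * heckeT F q n ⟨m, hm'⟩) := hXrec ⟨m, hm'⟩
      rw [hrec]
      exact hsmul_unit _ (((hTunit _).mul (ih (by omega))).mul (hTunit _))
  -- X j commutes with T k for j < k
  have hXT : ∀ j, ∀ k : Fin (n - 1), j < (k : ℕ) →
      X j * heckeT F q n k = heckeT F q n k * X j := by
    intro j
    induction j with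
    | zero => intro k _; rw [hX1, one_mul, mul_one]
    | succ m ih =>
      intro k hk
      have hm' : m < n - 1 := by have := k.isLt; omega
      have hrec : X (m + 1)
          = q⁻¹ • (heckeT F q n ⟨m, hm'⟩ * X m * heckeT F q n ⟨m, hm'⟩) := hXrec ⟨m, hm'⟩
      have hAC : heckeT F q n ⟨m, hm'⟩ * heckeT F q n k
          = heckeT F q n k * heckeT F q n ⟨m, hm'⟩ := hcommT ⟨m, hm'⟩ k hk
      have hWC : X m * heckeT F q n k = heckeT F q n k * X m := ih k (by omega)
      rw [hrec, smul_mul_assoc, mul_smul_comm]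
      congr 1
      simp only [mul_assoc]
      rw [hAC, mul_left_comm' hWC, mul_left_comm' hAC]
  -- the key braid computation: T_m X_m T_m X_m = X_m T_m X_m T_m
  have key : ∀ m (hm : m < n - 1),
      heckeT F q n ⟨m, hm⟩ * (X m * (heckeT F q n ⟨m, hm⟩ * X m))
        = X m * (heckeT F q n ⟨m, hm⟩ * (X m * heckeT F q n ⟨m, hm⟩)) := by
    intro m
    induction m with
    | zero => intro hm; rw [hX1]; simp
    | succ j ih =>
      intro hm
      have hj : j < n - 1 := by omega
      have hrec : X (j + 1)
          = q⁻¹ • (heckeT F q n ⟨j, hj⟩ * X j * heckeT F q n ⟨j, hj⟩) := hXrec ⟨j, hj⟩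
      have hb3 : heckeT F q n ⟨j, hj⟩ * heckeT F q n ⟨j + 1, hm⟩ * heckeT F q n ⟨j, hj⟩
          = heckeT F q n ⟨j + 1, hm⟩ * heckeT F q n ⟨j, hj⟩ * heckeT F q n ⟨j + 1, hm⟩ :=
        hbraid ⟨j, hj⟩ ⟨j + 1, hm⟩ rfl
      have hwT : X j * heckeT F q n ⟨j + 1, hm⟩ = heckeT F q n ⟨j + 1, hm⟩ * X j :=
        hXT j ⟨j + 1, hm⟩ (Nat.lt_succ_self j)
      rw [hrec]
      simp only [mul_smul_comm, smul_mul_assoc, smul_smul]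
      congr 1
      simp only [mul_assoc]
      exact key_step hb3 hwT (ih hj)
  -- the commutation for a < b
  have hcomm : ∀ b, b < n → ∀ a, a < b → X a * X b = X b * X a := by
    intro b
    induction b with
    | zero => intro _ a ha; omega
    | succ c ih =>
      intro hb a ha
      have hc' : c < n - 1 := by omega
      have hrec : X (c + 1)
          = q⁻¹ • (heckeT F q n ⟨c, hc'⟩ * X c * heckeT F q n ⟨c, hc'⟩) := hXrec ⟨c, hc'⟩
      rcases Nat.lt_or_ge a c with hac | hac
      · have h1 : X a * heckeT F q n ⟨c, hc'⟩ = heckeT F q n ⟨c, hc'⟩ * X a :=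
          hXT a ⟨c, hc'⟩ hac
        have h2 : X a * X c = X c * X a := ih (by omega) a hac
        rw [hrec, mul_smul_comm, smul_mul_assoc]
        congr 1
        simp only [mul_assoc]
        rw [mul_left_comm' h1, mul_left_comm' h2, h1]
      · have hac' : a = c := by omega
        subst hac'
        rw [hrec, mul_smul_comm, smul_mul_assoc]
        congr 1
        simp only [mul_assoc]
        exact (key a hc').symm
  refine ⟨?_, hXunit⟩
  intro a b ha hb
  rcases lt_trichotomy a b with h | h | h
  · exact hcomm b hb a h
  · rw [h]
  · exact (hcomm a ha b h).symm
end

section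
/- Let A = ⊕_{k∈Z} A_k be a finite-dimensional graded algebra over a field F, and let X, Y be finite-dimensional graded (right) A-modules that are indecomposable. If the underlying ungraded modules For(X) and For(Y) are isomorphic as A-modules, then X ≅ Y[k] as graded A-modules for some k ∈ Z, where [k] denotes the grading shift M[1]_l = M_{l+1}. -/
open DirectSum

section Proj

variable {F : Type} [Field F] {M : Type} [AddCommGroup M] [Module F M]
variable (ℳ : ℤ → Submodule F M) [DirectSum.Decomposition ℳ]

/-- Projection onto the `l`-th graded component. -/
noncomputable def gProj (l : ℤ) : M →ₗ[F] M :=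
  (ℳ l).subtype ∘ₗ (DirectSum.component F ℤ (fun i => ↥(ℳ i)) l) ∘ₗ
    (DirectSum.decomposeLinearEquiv ℳ).toLinearMap

lemma gProj_apply (l : ℤ) (x : M) :
    gProj ℳ l x = ↑(DirectSum.decompose ℳ x l) := rfl

lemma gProj_mem (l : ℤ) (x : M) : gProj ℳ l x ∈ ℳ l :=
  (DirectSum.decompose ℳ x l).2

lemma gProj_of_mem_same {l : ℤ} {x : M} (hx : x ∈ ℳ l) : gProj ℳ l x = x := by
  rw [gProj_apply, DirectSum.decompose_of_mem_same ℳ hx]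

lemma gProj_of_mem_ne {l m : ℤ} {x : M} (hx : x ∈ ℳ l) (h : l ≠ m) :
    gProj ℳ m x = 0 := by
  rw [gProj_apply, DirectSum.decompose_of_mem_ne ℳ hx h]

lemma gProj_sum (s : Finset ℤ) (x : M) (h : ∀ l ∉ s, gProj ℳ l x = 0) :
    ∑ l ∈ s, gProj ℳ l x = x := by
  classical
  have hsupp : (DirectSum.decompose ℳ x).support ⊆ s := by
    intro l hl
    by_contra hls
    have := h l hls
    rw [gProj_apply] at this
    exact (DFinsupp.mem_support_iff.mp hl) (Subtype.ext this)
  have := DirectSum.sum_support_decompose ℳ x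
  calc ∑ l ∈ s, gProj ℳ l x
      = ∑ l ∈ (DirectSum.decompose ℳ x).support, gProj ℳ l x := by
        refine (Finset.sum_subset hsupp ?_).symm
        intro l _ hl
        rw [gProj_apply]
        simpa using (DFinsupp.notMem_support_iff.mp hl) ▸ rfl
    _ = x := by simpa only [gProj_apply] using this

/-- Two linear maps agreeing on homogeneous elements agree. -/
lemma gExt {P : Type} [AddCommGroup P] [Module F P] {f g : M →ₗ[F] P}
    (h : ∀ l : ℤ, ∀ x ∈ ℳ l, f x = g x) : f = g := by
  ext x
  have hx : x ∈ ⨆ l, ℳ l := by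
    rw [(DirectSum.Decomposition.isInternal ℳ).submodule_iSup_eq_top]; trivial
  refine Submodule.iSup_induction (motive := fun y => f y = g y) ℳ hx
    (fun i y hy => h i y hy) (by simp) (fun y z hy hz => by simp [map_add, hy, hz])

/-- The set of degrees with nonzero component is finite (fin. dim. case). -/
lemma gDegrees_finite [FiniteDimensional F M] : {l : ℤ | ℳ l ≠ ⊥}.Finite := by
  by_contra hinf
  have : Infinite {l : ℤ | ℳ l ≠ ⊥} := Set.infinite_coe_iff.mpr hinf
  have hv : ∀ l : {l : ℤ | ℳ l ≠ ⊥}, ∃ v : M, v ∈ ℳ l ∧ v ≠ 0 := by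
    intro l
    obtain ⟨v, hv, hv0⟩ := Submodule.exists_mem_ne_zero_of_ne_bot l.2
    exact ⟨v, hv, hv0⟩
  choose v hvmem hvne using hv
  have hind : iSupIndep (fun l : {l : ℤ | ℳ l ≠ ⊥} => ℳ l) :=
    (DirectSum.Decomposition.isInternal ℳ).submodule_iSupIndep.comp Subtype.coe_injective
  have hli := iSupIndep.linearIndependent _ hind (v := fun l => v l)
    (fun l => hvmem l) (fun l => hvne l)
  exact Module.Finite.not_linearIndependent_of_infinite _ hli

end Proj
section Comp

variable {F : Type} [Field F] {M N : Type} [AddCommGroup M] [Module F M]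
  [AddCommGroup N] [Module F N]
variable (ℳ : ℤ → Submodule F M) (𝒩 : ℤ → Submodule F N)
  [DirectSum.Decomposition ℳ] [DirectSum.Decomposition 𝒩]

/-- The degree-`k` component of a linear map. -/
noncomputable def gComp (k : ℤ) (h : M →ₗ[F] N) : M →ₗ[F] N :=
  (DirectSum.toModule F ℤ N (fun l => gProj 𝒩 (l + k) ∘ₗ h ∘ₗ (ℳ l).subtype)) ∘ₗ
    (DirectSum.decomposeLinearEquiv ℳ).toLinearMap

lemma gComp_apply_of_mem {k l : ℤ} (h : M →ₗ[F] N) {x : M} (hx : x ∈ ℳ l) :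
    gComp ℳ 𝒩 k h x = gProj 𝒩 (l + k) (h x) := by
  have : DirectSum.decompose ℳ x = DirectSum.lof F ℤ (fun i => ↥(ℳ i)) l ⟨x, hx⟩ := by
    rw [DirectSum.decompose_of_mem ℳ hx]; rfl
  simp only [gComp, LinearMap.comp_apply, LinearEquiv.coe_toLinearMap,
    DirectSum.decomposeLinearEquiv_apply, this, DirectSum.toModule_lof]
  rfl

lemma gComp_mem {k l : ℤ} (h : M →ₗ[F] N) {x : M} (hx : x ∈ ℳ l) :
    gComp ℳ 𝒩 k h x ∈ 𝒩 (l + k) := by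
  rw [gComp_apply_of_mem ℳ 𝒩 h hx]; exact gProj_mem _ _ _

end Comp
section Smul

variable {F A : Type} [Field F] [Ring A] [Algebra F A]
variable {M N : Type} [AddCommGroup M] [Module F M] [Module A M] [IsScalarTower F A M]
  [AddCommGroup N] [Module F N] [Module A N] [IsScalarTower F A N]
variable (𝒜 : ℤ → Submodule F A)
variable (ℳ : ℤ → Submodule F M) (𝒩 : ℤ → Submodule F N)
  [DirectSum.Decomposition ℳ] [DirectSum.Decomposition 𝒩]

lemma gProj_smul_homog
    (hsmulN : ∀ (k l : ℤ), ∀ a ∈ 𝒜 k, ∀ y ∈ 𝒩 l, a • y ∈ 𝒩 (l + k))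
    {m : ℤ} {a : A} (ha : a ∈ 𝒜 m) (n : ℤ) (y : N) :
    gProj 𝒩 (n + m) (a • y) = a • gProj 𝒩 n y := by
  have : (gProj 𝒩 (n + m) ∘ₗ DistribMulAction.toLinearMap F N a : N →ₗ[F] N)
      = DistribMulAction.toLinearMap F N a ∘ₗ gProj 𝒩 n := by
    apply gExt 𝒩
    intro j z hz
    show gProj 𝒩 (n + m) (a • z) = a • gProj 𝒩 n z
    have hz' : a • z ∈ 𝒩 (j + m) := hsmulN m j a ha z hz
    by_cases hjn : j = n
    · subst hjn
      rw [gProj_of_mem_same 𝒩 hz', gProj_of_mem_same 𝒩 hz]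
    · rw [gProj_of_mem_ne 𝒩 hz' (show (j : ℤ) + m ≠ n + m by omega),
        gProj_of_mem_ne 𝒩 hz hjn, smul_zero]
  exact congrArg (fun (φ : N →ₗ[F] N) => φ y) this

lemma gComp_smul (h𝒜 : DirectSum.IsInternal 𝒜)
    (hsmulM : ∀ (k l : ℤ), ∀ a ∈ 𝒜 k, ∀ x ∈ ℳ l, a • x ∈ ℳ (l + k))
    (hsmulN : ∀ (k l : ℤ), ∀ a ∈ 𝒜 k, ∀ y ∈ 𝒩 l, a • y ∈ 𝒩 (l + k))
    (h : M →ₗ[A] N) (k : ℤ) (a : A) (x : M) :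
    gComp ℳ 𝒩 k (h.restrictScalars F) (a • x) = a • gComp ℳ 𝒩 k (h.restrictScalars F) x := by
  -- first reduce to homogeneous x
  set h' : M →ₗ[F] N := h.restrictScalars F with hh'
  suffices hgoal : ∀ l : ℤ, ∀ x ∈ ℳ l, gComp ℳ 𝒩 k h' (a • x) = a • gComp ℳ 𝒩 k h' x by
    have : (gComp ℳ 𝒩 k h' ∘ₗ DistribMulAction.toLinearMap F M a : M →ₗ[F] N)
        = DistribMulAction.toLinearMap F N a ∘ₗ gComp ℳ 𝒩 k h' := by
      apply gExt ℳ
      intro l z hz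
      exact hgoal l z hz
    exact congrArg (fun (φ : M →ₗ[F] N) => φ x) this
  intro l x hx
  -- now reduce to homogeneous a
  have hmem : a ∈ ⨆ m, 𝒜 m := by rw [h𝒜.submodule_iSup_eq_top]; trivial
  refine Submodule.iSup_induction (motive := fun b =>
      gComp ℳ 𝒩 k h' (b • x) = b • gComp ℳ 𝒩 k h' x) 𝒜 hmem ?_ (by simp) ?_
  · intro m b hb
    have hbx : b • x ∈ ℳ (l + m) := hsmulM m l b hb x hx
    rw [gComp_apply_of_mem ℳ 𝒩 h' hbx, gComp_apply_of_mem ℳ 𝒩 h' hx]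
    have hcomm : h' (b • x) = b • h' x := h.map_smul b x
    rw [hcomm]
    have := gProj_smul_homog 𝒜 𝒩 hsmulN hb (l + k) (h' x)
    rw [show l + m + k = l + k + m by ring, this]
  · intro b c hbx hcx
    simp [add_smul, map_add, hbx, hcx]

end Smul
section SumSupport

variable {F : Type} [Field F] {M : Type} [AddCommGroup M] [Module F M]
variable (ℳ : ℤ → Submodule F M) [DirectSum.Decomposition ℳ]

lemma gProj_exists_sum (x : M) : ∃ s : Finset ℤ, ∑ l ∈ s, gProj ℳ l x = x := by
  classical
  refine ⟨(DirectSum.decompose ℳ x).support, gProj_sum ℳ _ x ?_⟩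
  intro l hl
  rw [gProj_apply, DFinsupp.notMem_support_iff.mp hl]
  simp

end SumSupport

/-- A submodule `p` of a module `M` graded by `ℳ : ℤ → Submodule F M` is *graded*
(homogeneous) if, as an `F`-subspace, it is the sum of its intersections with the
homogeneous components. -/
def IsGradedSubmodule {F A M : Type} [Field F] [Ring A] [Algebra F A]
    [AddCommGroup M] [Module F M] [Module A M] [IsScalarTower F A M]
    (ℳ : ℤ → Submodule F M) (p : Submodule A M) : Prop :=
  p.restrictScalars F = ⨆ l : ℤ, (p.restrictScalars F ⊓ ℳ l)

lemma isGradedSubmodule_of_proj {F A M : Type} [Field F] [Ring A] [Algebra F A]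
    [AddCommGroup M] [Module F M] [Module A M] [IsScalarTower F A M]
    (ℳ : ℤ → Submodule F M) [DirectSum.Decomposition ℳ] (p : Submodule A M)
    (hp : ∀ (l : ℤ) (x : M), x ∈ p → gProj ℳ l x ∈ p) : IsGradedSubmodule ℳ p := by
  refine le_antisymm ?_ (iSup_le fun l => inf_le_left)
  intro x hx
  obtain ⟨s, hs⟩ := gProj_exists_sum ℳ x
  rw [← hs]
  refine Submodule.sum_mem _ (fun l _ => Submodule.mem_iSup_of_mem l ?_)
  exact ⟨hp l x hx, gProj_mem ℳ l x⟩
set_option maxHeartbeats 3200000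
set_option synthInstance.maxHeartbeats 400000

/-- Let `A = ⊕ₖ Aₖ` be a finite-dimensional graded algebra over a field `F`, and
let `X`, `Y` be finite-dimensional graded (right) `A`-modules (grading convention
`X_l · A_k ⊆ X_{l+k}`) that are indecomposable.  If the underlying ungraded
modules `For(X)` and `For(Y)` are isomorphic as `A`-modules, then `X ≅ Y[k]` as
graded `A`-modules for some `k ∈ ℤ`, i.e. there is an `A`-module isomorphism
carrying `X_l` onto `Y_{l+k}` for all `l` (recall `Y[k]_l = Y_{l+k}`). -/
theorem graded_indecomposable_iso_shift
    (F A : Type) [Field F] [Ring A] [Algebra F A] [FiniteDimensional F A]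
    (𝒜 : ℤ → Submodule F A) (h𝒜 : DirectSum.IsInternal 𝒜)
    (h𝒜mul : ∀ (k l : ℤ), ∀ a ∈ 𝒜 k, ∀ b ∈ 𝒜 l, a * b ∈ 𝒜 (k + l))
    (X : Type) [AddCommGroup X] [Module F X] [Module A X] [IsScalarTower F A X]
    [FiniteDimensional F X]
    (ℳX : ℤ → Submodule F X) (hℳX : DirectSum.IsInternal ℳX)
    (hsmulX : ∀ (k l : ℤ), ∀ a ∈ 𝒜 k, ∀ x ∈ ℳX l, a • x ∈ ℳX (l + k))
    (Y : Type) [AddCommGroup Y] [Module F Y] [Module A Y] [IsScalarTower F A Y]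
    [FiniteDimensional F Y]
    (ℳY : ℤ → Submodule F Y) (hℳY : DirectSum.IsInternal ℳY)
    (hsmulY : ∀ (k l : ℤ), ∀ a ∈ 𝒜 k, ∀ y ∈ ℳY l, a • y ∈ ℳY (l + k))
    -- `X` and `Y` are indecomposable graded modules:
    (hXind : Nontrivial X ∧ ∀ p q : Submodule A X,
      IsGradedSubmodule ℳX p → IsGradedSubmodule ℳX q → IsCompl p q → p = ⊥ ∨ q = ⊥)
    (hYind : Nontrivial Y ∧ ∀ p q : Submodule A Y,
      IsGradedSubmodule ℳY p → IsGradedSubmodule ℳY q → IsCompl p q → p = ⊥ ∨ q = ⊥)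
    -- the underlying ungraded modules are isomorphic:
    (hiso : Nonempty (X ≃ₗ[A] Y)) :
    ∃ (k : ℤ) (f : X ≃ₗ[A] Y), ∀ l : ℤ,
      (ℳX l).map ((f : X →ₗ[A] Y).restrictScalars F) = ℳY (l + k) := by
  classical
  obtain ⟨f⟩ := hiso
  obtain ⟨hXnt, hXi⟩ := hXind
  letI : DirectSum.Decomposition ℳX := hℳX.chooseDecomposition
  letI : DirectSum.Decomposition ℳY := hℳY.chooseDecomposition
  set u : X →ₗ[F] Y := (f : X →ₗ[A] Y).restrictScalars F with hu
  set v : Y →ₗ[F] X := ((f.symm : Y →ₗ[A] X) : Y →ₗ[A] X).restrictScalars F with hv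
  have hvu : ∀ x : X, v (u x) = x := fun x => f.symm_apply_apply x
  -- finite degree sets
  set SX : Finset ℤ := (gDegrees_finite ℳX).toFinset with hSX
  set SY : Finset ℤ := (gDegrees_finite ℳY).toFinset with hSY
  set T : Finset ℤ := (SY ×ˢ SX).image (fun p => p.1 - p.2) with hT
  -- degree-`i` pieces of the isomorphism and the induced degree-0 endomorphisms
  set g : ℤ → (Module.End F X) :=
    (fun i => (gComp ℳY ℳX (-i) v) ∘ₗ (gComp ℳX ℳY i u)) with hg
  -- the algebra of degree-0 `A`-linear endomorphisms of `X`
  set E : Subalgebra F (Module.End F X) :=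
    { carrier := {h | (∀ l : ℤ, ∀ x ∈ ℳX l, h x ∈ ℳX l) ∧
        ∀ (a : A) (x : X), h (a • x) = a • h x}
      mul_mem' := fun {h₁ h₂} H1 H2 => ⟨fun l x hx => H1.1 l _ (H2.1 l x hx),
        fun a x => by
          show h₁ (h₂ (a • x)) = a • h₁ (h₂ x)
          rw [H2.2, H1.2]⟩
      one_mem' := ⟨fun l x hx => hx, fun a x => rfl⟩
      add_mem' := fun {h₁ h₂} H1 H2 => ⟨fun l x hx => by
          exact Submodule.add_mem _ (H1.1 l x hx) (H2.1 l x hx),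
        fun a x => by
          show h₁ (a • x) + h₂ (a • x) = a • (h₁ x + h₂ x)
          rw [H1.2, H2.2, smul_add]⟩
      algebraMap_mem' := fun c => ⟨fun l x hx => by
          rw [Module.algebraMap_end_apply]
          exact Submodule.smul_mem _ c hx,
        fun a x => by
          rw [Module.algebraMap_end_apply, Module.algebraMap_end_apply, smul_comm]⟩ } with hE
  have hmemE : ∀ h : Module.End F X, h ∈ E ↔ ((∀ l : ℤ, ∀ x ∈ ℳX l, h x ∈ ℳX l) ∧
      ∀ (a : A) (x : X), h (a • x) = a • h x) := fun h => Iff.rfl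
  haveI hEnt : Nontrivial E := by
    refine nontrivial_of_ne 0 1 (fun h01 => ?_)
    obtain ⟨x, hx⟩ := exists_ne (0 : X)
    have := congrArg (fun e : E => (e : Module.End F X) x) h01
    simp at this
    exact hx this.symm
  -- each `g i` lies in `E`
  have hgE : ∀ i : ℤ, g i ∈ E := by
    intro i
    refine (hmemE _).mpr ⟨?_, ?_⟩
    · intro l x hx
      have h1 : gComp ℳX ℳY i u x ∈ ℳY (l + i) := gComp_mem ℳX ℳY u hx
      have h2 : gComp ℳY ℳX (-i) v (gComp ℳX ℳY i u x) ∈ ℳX (l + i + -i) :=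
        gComp_mem ℳY ℳX v h1
      rw [show l + i + -i = l by ring] at h2
      exact h2
    · intro a x
      show gComp ℳY ℳX (-i) v (gComp ℳX ℳY i u (a • x)) = _
      rw [hu, gComp_smul 𝒜 ℳX ℳY h𝒜 hsmulX hsmulY (f : X →ₗ[A] Y) i a x,
        hv, gComp_smul 𝒜 ℳY ℳX h𝒜 hsmulY hsmulX (f.symm : Y →ₗ[A] X) (-i) a _]
      rfl
  -- every element of `E` is nilpotent or a unit
  have key : ∀ e : E, IsNilpotent e ∨ IsUnit e := by
    intro e
    obtain ⟨hdeg, hAlin⟩ := (hmemE _).mp e.2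
    set h : Module.End F X := (e : Module.End F X) with hh
    set hA : X →ₗ[A] X := { toFun := h, map_add' := map_add h, map_smul' := hAlin } with hhA
    letI : IsNoetherian A X := isNoetherian_of_tower F inferInstance
    letI : IsArtinian A X := isArtinian_of_tower F inferInstance
    obtain ⟨N, hN⟩ :=
      Filter.eventually_atTop.mp (LinearMap.eventually_isCompl_ker_pow_range_pow hA)
    set n := max N 1 with hn
    have hc := hN n (le_max_left _ _)
    have hpow : ∀ (m : ℕ) (x : X), (hA ^ m) x = (h ^ m) x := by
      intro m
      induction m with
      | zero => intro x; rfl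
      | succ m ih =>
        intro x
        rw [pow_succ, pow_succ, Module.End.mul_apply, Module.End.mul_apply, ih]
        rfl
    have hpowdeg : ∀ (m : ℕ) (l : ℤ), ∀ x ∈ ℳX l, (hA ^ m) x ∈ ℳX l := by
      intro m
      induction m with
      | zero => intro l x hx; simpa using hx
      | succ m ih =>
        intro l x hx
        rw [pow_succ, Module.End.mul_apply]
        exact ih l _ (hdeg l x hx)
    have hcomm : ∀ (l : ℤ) (x : X), gProj ℳX l ((hA ^ n) x) = (hA ^ n) (gProj ℳX l x) := by
      intro l
      have heq : (gProj ℳX l ∘ₗ ((hA ^ n).restrictScalars F) : X →ₗ[F] X)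
          = ((hA ^ n).restrictScalars F) ∘ₗ gProj ℳX l := by
        apply gExt ℳX
        intro m z hz
        show gProj ℳX l ((hA ^ n) z) = (hA ^ n) (gProj ℳX l z)
        by_cases hml : m = l
        · subst hml
          rw [gProj_of_mem_same ℳX (hpowdeg n m z hz), gProj_of_mem_same ℳX hz]
        · rw [gProj_of_mem_ne ℳX (hpowdeg n m z hz) hml, gProj_of_mem_ne ℳX hz hml,
            map_zero]
      intro x
      exact congrArg (fun φ : X →ₗ[F] X => φ x) heq
    have gker : IsGradedSubmodule ℳX (LinearMap.ker (hA ^ n)) := by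
      apply isGradedSubmodule_of_proj
      intro l x hx
      rw [LinearMap.mem_ker] at hx ⊢
      rw [← hcomm l x, hx, map_zero]
    have grange : IsGradedSubmodule ℳX (LinearMap.range (hA ^ n)) := by
      apply isGradedSubmodule_of_proj
      intro l x hx
      obtain ⟨z, hz⟩ := hx
      exact ⟨gProj ℳX l z, by rw [← hcomm l z, hz]⟩
    rcases hXi _ _ gker grange hc with hker | hrange
    · -- the kernel vanishes: `h` is bijective, hence a unit of `E`
      right
      have hinj : Function.Injective h := by
        intro x y hxy
        have hxyker : x - y ∈ LinearMap.ker (hA ^ n) := by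
          rw [LinearMap.mem_ker]
          obtain ⟨m, hm⟩ : ∃ m, n = m + 1 := ⟨n - 1, by omega⟩
          rw [hm, pow_succ, Module.End.mul_apply]
          have hxy0 : hA (x - y) = 0 := by
            show h (x - y) = 0
            rw [map_sub, sub_eq_zero]
            exact hxy
          rw [hxy0, map_zero]
        rw [hker, Submodule.mem_bot] at hxyker
        exact sub_eq_zero.mp hxyker
      have hsurj : Function.Surjective h := LinearMap.injective_iff_surjective.mp hinj
      set eqv : X ≃ₗ[F] X := LinearEquiv.ofBijective h ⟨hinj, hsurj⟩ with heqv
      set τ : Module.End F X := (eqv.symm : X →ₗ[F] X) with hτ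
      have hheq : ∀ z, h (τ z) = z := fun z => eqv.apply_symm_apply z
      have hτh : ∀ z, τ (h z) = z := fun z => eqv.symm_apply_apply z
      have hτdeg : ∀ l : ℤ, ∀ x ∈ ℳX l, τ x ∈ ℳX l := by
        intro l x hx
        set hres : ℳX l →ₗ[F] ℳX l := h.restrict (fun z hz => hdeg l z hz) with hhres
        have hresinj : Function.Injective hres := by
          intro a b hab
          apply Subtype.ext
          apply hinj
          exact congrArg Subtype.val hab
        have hressurj := LinearMap.injective_iff_surjective.mp hresinj
        obtain ⟨⟨z, hz⟩, hzeq⟩ := hressurj ⟨x, hx⟩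
        have hzx : h z = x := congrArg Subtype.val hzeq
        rw [← hzx, hτh z]
        exact hz
      have hτA : ∀ (a : A) (z : X), τ (a • z) = a • τ z := by
        intro a z
        apply hinj
        rw [hheq, hAlin, hheq]
      set einv : E := ⟨τ, (hmemE τ).mpr ⟨hτdeg, hτA⟩⟩ with heinv
      have h1 : e * einv = 1 := by
        apply Subtype.val_injective
        show h * τ = 1
        ext z
        exact hheq z
      have h2 : einv * e = 1 := by
        apply Subtype.val_injective
        show τ * h = 1
        ext z
        exact hτh z
      exact ⟨⟨e, einv, h1, h2⟩, rfl⟩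
    · -- the range vanishes: `h` is nilpotent
      left
      refine ⟨n, ?_⟩
      apply Subtype.val_injective
      rw [SubmonoidClass.coe_pow]
      show (h ^ n : Module.End F X) = (0 : E).val
      rw [ZeroMemClass.coe_zero]
      ext x
      have hx0 : (hA ^ n) x = 0 := by
        have hmem : (hA ^ n) x ∈ LinearMap.range (hA ^ n) := ⟨x, rfl⟩
        rw [hrange, Submodule.mem_bot] at hmem
        exact hmem
      rw [LinearMap.zero_apply, ← hpow n x, hx0]
  -- the sum of the `g i` over `T` is the identity
  have idsum : ∑ i ∈ T, g i = (1 : Module.End F X) := by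
    have hmain : (∑ i ∈ T, g i : X →ₗ[F] X) = (LinearMap.id : X →ₗ[F] X) := by
      apply gExt ℳX
      intro l x hx
      rw [LinearMap.sum_apply, LinearMap.id_apply]
      by_cases hx0 : x = 0
      · subst hx0; simp
      have hstep : ∀ i : ℤ, (g i) x = gProj ℳX l (v (gProj ℳY (l + i) (u x))) := by
        intro i
        show gComp ℳY ℳX (-i) v (gComp ℳX ℳY i u x) = _
        rw [gComp_apply_of_mem ℳX ℳY u hx,
          gComp_apply_of_mem ℳY ℳX v (gProj_mem ℳY (l + i) (u x)),
          show l + i + -i = l by ring]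
      have hinner : ∑ i ∈ T, gProj ℳY (l + i) (u x) = u x := by
        have hre : ∑ m ∈ T.image (fun i : ℤ => l + i), gProj ℳY m (u x)
            = ∑ i ∈ T, gProj ℳY (l + i) (u x) :=
          Finset.sum_image (fun a _ b _ hab => by omega)
        rw [← hre]
        apply gProj_sum
        intro m hm
        by_contra hne
        apply hm
        have hmY : ℳY m ≠ ⊥ := by
          intro hbot
          apply hne
          have := gProj_mem ℳY m (u x)
          rw [hbot, Submodule.mem_bot] at this
          exact this
        have hlX : ℳX l ≠ ⊥ := by
          intro hbot
          apply hx0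
          rw [hbot, Submodule.mem_bot] at hx
          exact hx
        have hmSY : m ∈ SY := by rw [hSY, Set.Finite.mem_toFinset]; exact hmY
        have hlSX : l ∈ SX := by rw [hSX, Set.Finite.mem_toFinset]; exact hlX
        refine Finset.mem_image.mpr ⟨m - l, ?_, by ring⟩
        rw [hT]
        exact Finset.mem_image.mpr ⟨(m, l), Finset.mem_product.mpr ⟨hmSY, hlSX⟩, rfl⟩
      calc ∑ i ∈ T, (g i) x
          = ∑ i ∈ T, gProj ℳX l (v (gProj ℳY (l + i) (u x))) :=
            Finset.sum_congr rfl (fun i _ => hstep i)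
        _ = gProj ℳX l (v (∑ i ∈ T, gProj ℳY (l + i) (u x))) := by
            rw [map_sum, map_sum]
        _ = gProj ℳX l (v (u x)) := by rw [hinner]
        _ = x := by rw [hvu x, gProj_of_mem_same ℳX hx]
    exact hmain
  -- hence some `g i` is a unit of `E`
  set gE : ℤ → E := fun i => ⟨g i, hgE i⟩ with hgEdef
  have hone : ∑ i ∈ T, gE i = 1 := by
    apply Subtype.val_injective
    rw [AddSubmonoidClass.coe_finset_sum]
    exact idsum
  have hnonadd : ∀ a b : E, ¬IsUnit a → ¬IsUnit b → ¬IsUnit (a + b) := by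
    intro a b ha hb hab
    obtain ⟨s, hs⟩ := hab
    have h1 : ((s⁻¹ : Eˣ) : E) * a + ((s⁻¹ : Eˣ) : E) * b = 1 := by
      rw [← mul_add, ← hs, Units.inv_mul]
    rcases key (((s⁻¹ : Eˣ) : E) * a) with hn | hu
    · apply hb
      have hbeq : ((s⁻¹ : Eˣ) : E) * b = 1 - ((s⁻¹ : Eˣ) : E) * a := by
        rw [eq_sub_iff_add_eq, add_comm]
        exact h1
      have hub : IsUnit (((s⁻¹ : Eˣ) : E) * b) := by
        rw [hbeq]
        exact hn.isUnit_one_sub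
      have hb' : (s : E) * (((s⁻¹ : Eˣ) : E) * b) = b := by
        rw [← mul_assoc, Units.mul_inv, one_mul]
      rw [← hb']
      exact (Units.isUnit s).mul hub
    · apply ha
      have ha' : (s : E) * (((s⁻¹ : Eˣ) : E) * a) = a := by
        rw [← mul_assoc, Units.mul_inv, one_mul]
      rw [← ha']
      exact (Units.isUnit s).mul hu
  have hexists : ∃ i ∈ T, IsUnit (gE i) := by
    by_contra hcon
    push_neg at hcon
    have h1 : ¬IsUnit (∑ i ∈ T, gE i) := by
      refine Finset.sum_induction gE (fun z => ¬IsUnit z) hnonadd ?_ hcon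
      exact not_isUnit_zero
    rw [hone] at h1
    exact h1 isUnit_one
  obtain ⟨i, hiT, hunit⟩ := hexists
  -- the degree-`i` component of `f` is the desired isomorphism
  obtain ⟨w, hw⟩ := hunit
  have hleft : ∀ x : X, (((w⁻¹ : Eˣ) : E) : Module.End F X) ((g i) x) = x := by
    intro x
    have hwi : ((w⁻¹ : Eˣ) : E) * gE i = 1 := by rw [← hw, Units.inv_mul]
    have := congrArg (fun e : E => (e : Module.End F X) x) hwi
    simpa using this
  set ui : X →ₗ[F] Y := gComp ℳX ℳY i u with hui
  have hinj : Function.Injective ui := by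
    intro x y hxy
    have hgxy : (g i) x = (g i) y := by
      show gComp ℳY ℳX (-i) v (gComp ℳX ℳY i u x)
        = gComp ℳY ℳX (-i) v (gComp ℳX ℳY i u y)
      rw [show gComp ℳX ℳY i u x = ui x from rfl, show gComp ℳX ℳY i u y = ui y from rfl,
        hxy]
    rw [← hleft x, ← hleft y, hgxy]
  have hdim : Module.finrank F X = Module.finrank F Y :=
    (f.restrictScalars F).finrank_eq
  have hsurj : Function.Surjective ui :=
    (LinearMap.injective_iff_surjective_of_finrank_eq_finrank hdim).mp hinj
  have hsmul_ui : ∀ (a : A) (x : X), ui (a • x) = a • ui x := by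
    intro a x
    rw [hui, hu]
    exact gComp_smul 𝒜 ℳX ℳY h𝒜 hsmulX hsmulY (f : X →ₗ[A] Y) i a x
  set uA : X →ₗ[A] Y := { toFun := ui, map_add' := map_add ui, map_smul' := hsmul_ui }
    with huA
  have hbij : Function.Bijective uA := ⟨hinj, hsurj⟩
  refine ⟨i, LinearEquiv.ofBijective uA hbij, fun l => ?_⟩
  apply le_antisymm
  · rintro y ⟨x, hx, rfl⟩
    exact gComp_mem ℳX ℳY u hx
  · intro y hy
    obtain ⟨x, hxy⟩ := hsurj y
    set s : Finset ℤ := insert l SX with hs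
    have hsum : ∑ m ∈ s, gProj ℳX m x = x := by
      apply gProj_sum
      intro m hm
      have hmX : ℳX m = ⊥ := by
        by_contra hne
        exact hm (Finset.mem_insert_of_mem (by rw [hSX, Set.Finite.mem_toFinset]; exact hne))
      have := gProj_mem ℳX m x
      rw [hmX, Submodule.mem_bot] at this
      exact this
    have huix : ui x = ui (gProj ℳX l x) := by
      have hy' : ui x ∈ ℳY (l + i) := by rw [hxy]; exact hy
      calc ui x = gProj ℳY (l + i) (ui x) := (gProj_of_mem_same ℳY hy').symm
        _ = gProj ℳY (l + i) (∑ m ∈ s, ui (gProj ℳX m x)) := by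
            rw [← map_sum, hsum]
        _ = ∑ m ∈ s, gProj ℳY (l + i) (ui (gProj ℳX m x)) := map_sum _ _ _
        _ = gProj ℳY (l + i) (ui (gProj ℳX l x)) := by
            refine Finset.sum_eq_single_of_mem l (Finset.mem_insert_self l SX) ?_
            intro m _ hml
            exact gProj_of_mem_ne ℳY (gComp_mem ℳX ℳY u (gProj_mem ℳX m x))
              (by omega)
        _ = ui (gProj ℳX l x) :=
            gProj_of_mem_same ℳY (gComp_mem ℳX ℳY u (gProj_mem ℳX l x))
    refine ⟨gProj ℳX l x, gProj_mem ℳX l x, ?_⟩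
    show ui (gProj ℳX l x) = y
    rw [← huix, hxy]
end
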